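/- Let A₀, A₁, …, A_m ∈ ℂ^{k×ℓ} with m ≥ 1, let E₀, …, E_m ∈ ℂ^{k×ℓ} be error matrices, and let (λ̂, x̂) ∈ ℂ^m × ℂ^ℓ with x̂ ≠ 0. Set r̂ = W(λ̂) x̂ and γ̂ = ‖E₀‖ + Σ_{i=1}^m |λ̂_i| ‖E_i‖, and assume γ̂ > 0. Then the set of all ε ≥ 0 for which there exist perturbation matrices ΔA₀, …, ΔA_m ∈ ℂ^{k×ℓ} satisfying ‖ΔA_i‖ ≤ ε ‖E_i‖ for all i = 0, …, m and (A₀ + ΔA₀) x̂ + Σ_{i=1}^m λ̂_i (A_i + ΔA_i) x̂ = 0 has a least element, and this least element equals ‖r̂‖ / (γ̂ ‖x̂‖). -/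

import Mathlib

open scoped ComplexOrder

noncomputable def euclNorm {n : ℕ} (x : Fin n → ℂ) : ℝ :=
  ‖(WithLp.equiv 2 (Fin n → ℂ)).symm x‖

noncomputable def opNorm2 {k l : ℕ} (M : Matrix (Fin k) (Fin l) ℂ) : ℝ :=
  ‖LinearMap.toContinuousLinearMap (Matrix.toEuclideanLin M)‖

noncomputable def sigmaMin {k l : ℕ} (M : Matrix (Fin k) (Fin l) ℂ) : ℝ :=
  sInf {r : ℝ | ∃ x : Fin l → ℂ, euclNorm x = 1 ∧ r = euclNorm (M.mulVec x)}

noncomputable def pencil {m k l : ℕ} (A : Fin (m + 1) → Matrix (Fin k) (Fin l) ℂ)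
    (lam : Fin m → ℂ) : Matrix (Fin k) (Fin l) ℂ :=
  A 0 + ∑ i : Fin m, lam i • A i.succ

noncomputable def gammaVal {m k l : ℕ} (E : Fin (m + 1) → Matrix (Fin k) (Fin l) ℂ)
    (lam : Fin m → ℂ) : ℝ :=
  opNorm2 (E 0) + ∑ i : Fin m, ‖lam i‖ * opNorm2 (E i.succ)

lemma euclNorm_nonneg' {n : ℕ} (x : Fin n → ℂ) : 0 ≤ euclNorm x := norm_nonneg _

lemma euclNorm_pos {n : ℕ} {x : Fin n → ℂ} (hx : x ≠ 0) : 0 < euclNorm x := by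
  rw [euclNorm, norm_pos_iff]
  intro h
  exact hx ((WithLp.equiv 2 (Fin n → ℂ)).symm.injective (by simpa using h))

lemma euclNorm_smul {n : ℕ} (c : ℂ) (v : Fin n → ℂ) :
    euclNorm (c • v) = ‖c‖ * euclNorm v := by
  rw [show euclNorm (c • v) = ‖c • (WithLp.equiv 2 (Fin n → ℂ)).symm v‖ from rfl, norm_smul]
  rfl

lemma euclNorm_neg {n : ℕ} (v : Fin n → ℂ) : euclNorm (-v) = euclNorm v :=
  norm_neg ((WithLp.equiv 2 (Fin n → ℂ)).symm v)

lemma euclNorm_add_le {n : ℕ} (v w : Fin n → ℂ) : euclNorm (v + w) ≤ euclNorm v + euclNorm w :=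
  norm_add_le ((WithLp.equiv 2 (Fin n → ℂ)).symm v) ((WithLp.equiv 2 (Fin n → ℂ)).symm w)

lemma euclNorm_sum_le {n : ℕ} {ι : Type*} (s : Finset ι) (f : ι → Fin n → ℂ) :
    euclNorm (∑ i ∈ s, f i) ≤ ∑ i ∈ s, euclNorm (f i) := by
  have h : (WithLp.equiv 2 (Fin n → ℂ)).symm (∑ i ∈ s, f i)
      = ∑ i ∈ s, (WithLp.equiv 2 (Fin n → ℂ)).symm (f i) :=
    map_sum (WithLp.linearEquiv 2 ℂ (Fin n → ℂ)).symm f s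
  unfold euclNorm; rw [h]
  exact norm_sum_le (E := EuclideanSpace ℂ (Fin n)) s
    (fun i => (WithLp.equiv 2 (Fin n → ℂ)).symm (f i))

lemma opNorm2_nonneg {k l : ℕ} (M : Matrix (Fin k) (Fin l) ℂ) : 0 ≤ opNorm2 M :=
  norm_nonneg _

lemma mulVec_euclNorm_le {k l : ℕ} (M : Matrix (Fin k) (Fin l) ℂ) (y : Fin l → ℂ) :
    euclNorm (M.mulVec y) ≤ opNorm2 M * euclNorm y := by
  have := (LinearMap.toContinuousLinearMap (Matrix.toEuclideanLin M)).le_opNorm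
      ((WithLp.equiv 2 (Fin l → ℂ)).symm y)
  simpa [euclNorm, opNorm2] using this

lemma dot_abs_le {l : ℕ} (x y : Fin l → ℂ) :
    ‖dotProduct (star x) y‖ ≤ euclNorm x * euclNorm y := by
  have := norm_inner_le_norm (𝕜 := ℂ) ((WithLp.equiv 2 (Fin l → ℂ)).symm x)
      ((WithLp.equiv 2 (Fin l → ℂ)).symm y)
  rw [show inner ℂ ((WithLp.equiv 2 (Fin l → ℂ)).symm x) ((WithLp.equiv 2 (Fin l → ℂ)).symm y)
      = dotProduct (star x) y from by rw [dotProduct_comm]; rfl] at this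
  simpa [euclNorm] using this

lemma vecMulVec_mulVec {k l : ℕ} (r : Fin k → ℂ) (w y : Fin l → ℂ) :
    (Matrix.vecMulVec r w).mulVec y = (dotProduct w y) • r := by
  ext i
  simp [Matrix.mulVec, Matrix.vecMulVec_apply, dotProduct, Finset.mul_sum, mul_comm,
    mul_assoc, mul_left_comm]

lemma dot_self_eq {l : ℕ} (x : Fin l → ℂ) :
    dotProduct (star x) x = ((euclNorm x : ℝ) : ℂ) ^ 2 := by
  have := inner_self_eq_norm_sq_to_K (𝕜 := ℂ) ((WithLp.equiv 2 (Fin l → ℂ)).symm x)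
  rw [show inner ℂ ((WithLp.equiv 2 (Fin l → ℂ)).symm x) ((WithLp.equiv 2 (Fin l → ℂ)).symm x)
      = dotProduct (star x) x from by rw [dotProduct_comm]; rfl] at this
  simpa [euclNorm] using this

lemma sum_mulVec {k l : ℕ} {ι : Type*} (s : Finset ι) (M : ι → Matrix (Fin k) (Fin l) ℂ)
    (y : Fin l → ℂ) : (∑ i ∈ s, M i).mulVec y = ∑ i ∈ s, (M i).mulVec y := by
  ext j
  simp only [Matrix.mulVec, dotProduct, Finset.sum_apply, Finset.sum_mul,
    Matrix.sum_apply]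
  rw [Finset.sum_comm]

lemma pencil_mulVec {m k l : ℕ} (A : Fin (m + 1) → Matrix (Fin k) (Fin l) ℂ)
    (lam : Fin m → ℂ) (x : Fin l → ℂ) :
    (pencil A lam).mulVec x = (A 0).mulVec x + ∑ i : Fin m, lam i • (A i.succ).mulVec x := by
  simp [pencil, Matrix.add_mulVec, sum_mulVec, Matrix.smul_mulVec]

lemma opNorm2_smul_vecMulVec {k l : ℕ} (c : ℂ) (r : Fin k → ℂ) (x : Fin l → ℂ) :
    opNorm2 (c • Matrix.vecMulVec r (star x)) ≤ ‖c‖ * (euclNorm r * euclNorm x) := by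
  rw [opNorm2]
  apply ContinuousLinearMap.opNorm_le_bound _
    (mul_nonneg (norm_nonneg _) (mul_nonneg (euclNorm_nonneg' r) (euclNorm_nonneg' x)))
  intro y
  have hrfl : LinearMap.toContinuousLinearMap
      (Matrix.toEuclideanLin (c • Matrix.vecMulVec r (star x))) y
      = (WithLp.equiv 2 (Fin k → ℂ)).symm
        ((c • Matrix.vecMulVec r (star x)).mulVec (WithLp.equiv 2 (Fin l → ℂ) y)) := rfl
  rw [hrfl]
  set y' := WithLp.equiv 2 (Fin l → ℂ) y with hy'
  have hy : ‖y‖ = euclNorm y' := rfl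
  show euclNorm ((c • Matrix.vecMulVec r (star x)).mulVec y') ≤ _
  rw [Matrix.smul_mulVec, vecMulVec_mulVec, euclNorm_smul, euclNorm_smul, hy]
  have := dot_abs_le x y'
  calc ‖c‖ * (‖dotProduct (star x) y'‖ * euclNorm r)
      ≤ ‖c‖ * ((euclNorm x * euclNorm y') * euclNorm r) :=
        mul_le_mul_of_nonneg_left
          (mul_le_mul_of_nonneg_right (dot_abs_le x y') (euclNorm_nonneg' r))
          (norm_nonneg _)
    _ = ‖c‖ * (euclNorm r * euclNorm x) * euclNorm y' := by ring

/-- the norm-wise backward error of an approximate eigenpair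
`(λ̂, x̂)` equals `‖r̂‖ / (γ̂ ‖x̂‖)`. -/
theorem eigenpair_backward_error {m k l : ℕ} (hm : 1 ≤ m)
    (A E : Fin (m + 1) → Matrix (Fin k) (Fin l) ℂ)
    (lam : Fin m → ℂ) (x : Fin l → ℂ) (hx : x ≠ 0)
    (r : Fin k → ℂ) (hr : r = (pencil A lam).mulVec x)
    (hγ : 0 < gammaVal E lam) :
    IsLeast {ε : ℝ | 0 ≤ ε ∧ ∃ ΔA : Fin (m + 1) → Matrix (Fin k) (Fin l) ℂ,
        (∀ i, opNorm2 (ΔA i) ≤ ε * opNorm2 (E i)) ∧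
        (pencil (fun i => A i + ΔA i) lam).mulVec x = 0}
      (euclNorm r / (gammaVal E lam * euclNorm x)) := by
  have hxp : 0 < euclNorm x := euclNorm_pos hx
  set γ := gammaVal E lam with hγdef
  set ε := euclNorm r / (γ * euclNorm x) with hεdef
  have hε0 : 0 ≤ ε := div_nonneg (euclNorm_nonneg' r) (mul_nonneg hγ.le hxp.le)
  constructor
  · -- membership
    refine ⟨hε0, ?_⟩
    set s : ℂ := dotProduct (star x) x with hs
    have hsval : s = ((euclNorm x : ℝ) : ℂ) ^ 2 := dot_self_eq x
    have hsne : s ≠ 0 := by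
      rw [hsval]
      exact pow_ne_zero _ (by exact_mod_cast hxp.ne')
    set d : Fin (m + 1) → ℂ := Fin.cases (((opNorm2 (E 0) / γ : ℝ) : ℂ))
      (fun i => (starRingEnd ℂ (lam i) / (‖lam i‖ : ℂ)) *
        ((opNorm2 (E i.succ) / γ : ℝ) : ℂ)) with hd
    have hd0 : d 0 = ((opNorm2 (E 0) / γ : ℝ) : ℂ) := rfl
    have hdsucc : ∀ i : Fin m, d i.succ = (starRingEnd ℂ (lam i) / (‖lam i‖ : ℂ)) *
        ((opNorm2 (E i.succ) / γ : ℝ) : ℂ) := fun i => by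
      rw [hd]; exact Fin.cases_succ i
    have habs : ∀ i, ‖d i‖ ≤ opNorm2 (E i) / γ := by
      intro i
      induction i using Fin.cases with
      | zero =>
        rw [hd0, Complex.norm_real, Real.norm_eq_abs, abs_of_nonneg (div_nonneg (opNorm2_nonneg _) hγ.le)]
      | succ i =>
        rw [hdsucc i, norm_mul, norm_div, Complex.norm_conj, Complex.norm_real, Real.norm_eq_abs,
          Complex.norm_real, Real.norm_eq_abs, abs_of_nonneg (norm_nonneg _),
          abs_of_nonneg (div_nonneg (opNorm2_nonneg _) hγ.le)]
        have h1 : ‖lam i‖ / ‖lam i‖ ≤ 1 := by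
          rcases eq_or_ne (‖lam i‖) 0 with h | h
          · simp [h]
          · simp [div_self h]
        calc ‖lam i‖ / ‖lam i‖ * (opNorm2 (E i.succ) / γ)
            ≤ 1 * (opNorm2 (E i.succ) / γ) := by
              gcongr
              exact div_nonneg (opNorm2_nonneg _) hγ.le
          _ = opNorm2 (E i.succ) / γ := one_mul _
    have hterm : ∀ i : Fin m, lam i * d i.succ
        = ((‖lam i‖ * (opNorm2 (E i.succ) / γ) : ℝ) : ℂ) := by
      intro i
      rw [hdsucc i]
      rcases eq_or_ne (lam i) 0 with h | h
      · simp [h]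
      · have habs0 : (‖lam i‖ : ℂ) ≠ 0 := by
          simpa using (norm_ne_zero_iff.mpr h)
        rw [← mul_assoc, mul_div_assoc', Complex.mul_conj, Complex.normSq_eq_norm_sq]
        push_cast
        field_simp
    have hsum1 : d 0 + ∑ i : Fin m, lam i * d i.succ = 1 := by
      rw [hd0]
      simp only [hterm]
      rw [← Complex.ofReal_sum, ← Complex.ofReal_add]
      have : opNorm2 (E 0) / γ + ∑ i : Fin m, ‖lam i‖ * (opNorm2 (E i.succ) / γ)
          = 1 := by
        have : ∀ i : Fin m, ‖lam i‖ * (opNorm2 (E i.succ) / γ)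
            = ‖lam i‖ * opNorm2 (E i.succ) / γ := fun i => by ring
        simp only [this]
        rw [← Finset.sum_div, ← add_div]
        rw [hγdef, gammaVal] at *
        exact div_self hγ.ne'
      rw [this, Complex.ofReal_one]
    set ΔA : Fin (m + 1) → Matrix (Fin k) (Fin l) ℂ :=
      fun i => (-(d i) / s) • Matrix.vecMulVec r (star x) with hΔA
    refine ⟨ΔA, ?_, ?_⟩
    · intro i
      have h1 : opNorm2 (ΔA i) ≤ ‖-(d i) / s‖ * (euclNorm r * euclNorm x) := by
        simp only [hΔA]
        exact opNorm2_smul_vecMulVec _ r x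
      have habss : ‖-(d i) / s‖ = ‖d i‖ / (euclNorm x) ^ 2 := by
        rw [norm_div, norm_neg, hsval]
        congr 1
        rw [← Complex.ofReal_pow, Complex.norm_real, Real.norm_eq_abs, abs_of_nonneg (by positivity)]
      rw [habss] at h1
      refine h1.trans ?_
      calc ‖d i‖ / (euclNorm x) ^ 2 * (euclNorm r * euclNorm x)
          ≤ (opNorm2 (E i) / γ) / (euclNorm x) ^ 2 * (euclNorm r * euclNorm x) := by
            gcongr
            · exact mul_nonneg (euclNorm_nonneg' r) (euclNorm_nonneg' x)
            · exact habs i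
        _ = ε * opNorm2 (E i) := by
            rw [hεdef]
            field_simp
    · have hAx : ∀ i, (ΔA i).mulVec x = (-(d i)) • r := by
        intro i
        simp only [hΔA]
        rw [Matrix.smul_mulVec, vecMulVec_mulVec, ← hs, smul_smul,
          div_mul_cancel₀ _ hsne]
      have key : (ΔA 0).mulVec x + ∑ i : Fin m, lam i • (ΔA i.succ).mulVec x = -r := by
        simp only [hAx, smul_smul]
        rw [← Finset.sum_smul, ← add_smul]
        have hcoef : -(d 0) + ∑ i : Fin m, lam i * -(d i.succ)
            = -(d 0 + ∑ i : Fin m, lam i * d i.succ) := by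
          rw [neg_add]
          congr 1
          rw [← Finset.sum_neg_distrib]
          exact Finset.sum_congr rfl fun i _ => by ring
        rw [hcoef, hsum1, neg_one_smul]
      have hrx : r = (A 0).mulVec x + ∑ i : Fin m, lam i • (A i.succ).mulVec x := by
        rw [hr, pencil_mulVec]
      rw [pencil_mulVec]
      simp only [Matrix.add_mulVec, smul_add, Finset.sum_add_distrib]
      have hregroup : (A 0).mulVec x + (ΔA 0).mulVec x +
          (∑ i : Fin m, lam i • (A i.succ).mulVec x +
            ∑ i : Fin m, lam i • (ΔA i.succ).mulVec x)
          = ((A 0).mulVec x + ∑ i : Fin m, lam i • (A i.succ).mulVec x) +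
            ((ΔA 0).mulVec x + ∑ i : Fin m, lam i • (ΔA i.succ).mulVec x) := by abel
      rw [hregroup, key, ← hrx, add_neg_cancel]
  · -- lower bound
    rintro ε' ⟨hε'0, ΔA, hbound, hzero⟩
    rw [pencil_mulVec] at hzero
    simp only [Matrix.add_mulVec, smul_add, Finset.sum_add_distrib] at hzero
    set D : Fin k → ℂ := (ΔA 0).mulVec x + ∑ i : Fin m, lam i • (ΔA i.succ).mulVec x with hD
    have hrx : r = (A 0).mulVec x + ∑ i : Fin m, lam i • (A i.succ).mulVec x := by
      rw [hr, pencil_mulVec]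
    have hzero' : r + D = 0 := by
      rw [hrx, hD, ← hzero]
      abel
    have hrD : r = -D := eq_neg_of_add_eq_zero_left hzero'
    have h1 : euclNorm r ≤ ε' * γ * euclNorm x := by
      rw [hrD, euclNorm_neg, hD]
      have t1 := euclNorm_add_le ((ΔA 0).mulVec x) (∑ i : Fin m, lam i • (ΔA i.succ).mulVec x)
      have t2 := euclNorm_sum_le Finset.univ (fun i : Fin m => lam i • (ΔA i.succ).mulVec x)
      have t3 : euclNorm ((ΔA 0).mulVec x) ≤ ε' * opNorm2 (E 0) * euclNorm x :=
        (mulVec_euclNorm_le _ _).trans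
          (mul_le_mul_of_nonneg_right (hbound 0) (euclNorm_nonneg' x))
      have t4 : ∀ i : Fin m, euclNorm (lam i • (ΔA i.succ).mulVec x)
          ≤ ‖lam i‖ * (ε' * opNorm2 (E i.succ) * euclNorm x) := by
        intro i
        rw [euclNorm_smul]
        exact mul_le_mul_of_nonneg_left
          ((mulVec_euclNorm_le _ _).trans
            (mul_le_mul_of_nonneg_right (hbound i.succ) (euclNorm_nonneg' x)))
          (norm_nonneg _)
      have hchain := t1.trans (add_le_add t3 (t2.trans (Finset.sum_le_sum fun i _ => t4 i)))
      refine hchain.trans_eq ?_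
      rw [hγdef, gammaVal]
      simp only [mul_add, add_mul, Finset.mul_sum, Finset.sum_mul]
      congr 1
      exact Finset.sum_congr rfl fun i _ => by ring
    rw [hεdef, div_le_iff₀ (mul_pos hγ hxp)]
    calc euclNorm r ≤ ε' * γ * euclNorm x := h1
      _ = ε' * (γ * euclNorm x) := by ring
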